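/- Let x, y : [0,T] → ℝ^d be continuously differentiable paths and let k(s,t) be the signature kernel (sum over all levels of inner products of iterated integrals). Then k satisfies the Volterra-type integral equation k(s,t) = 1 + ∫_0^s ∫_0^t k(p,q) ⟨ẋ_p, ẏ_q⟩ dq dp for all s, t in [0,T]. -/

import Mathlib

open MeasureTheory Set

noncomputable section

/-- The open simplex { s < u₁ < ... < uₙ < t }. -/
def simplex (n : ℕ) (s t : ℝ) : Set (Fin n → ℝ) :=
  {u | (∀ i, u i ∈ Set.Ioo s t) ∧ ∀ i j : Fin n, i < j → u i < u j}

/-- The n-th iterated integral (signature level) of the path x over [s,t],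
as a tensor in (ℝ^d)^⊗n, modelled as a function (Fin n → Fin d) → ℝ. -/
def iterInt (d : ℕ) (x : ℝ → Fin d → ℝ) (n : ℕ) (s t : ℝ) :
    (Fin n → Fin d) → ℝ :=
  fun idx => ∫ u in simplex n s t, ∏ i, deriv x (u i) (idx i)

/-- The tensor-power inner product. -/
def tInner {ι : Type*} [Fintype ι] (a b : ι → ℝ) : ℝ := ∑ i, a i * b i

/-- The induced (Hilbert–Schmidt / Euclidean) norm. -/
def tNorm {ι : Type*} [Fintype ι] (a : ι → ℝ) : ℝ := Real.sqrt (tInner a a)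

/-- The signature kernel of paths x and y. -/
def sigKernel (d : ℕ) (x y : ℝ → Fin d → ℝ) (s t : ℝ) : ℝ :=
  ∑' n : ℕ, tInner (iterInt d x n 0 s) (iterInt d y n 0 t)


open intervalIntegral

lemma simplex_isOpen (n : ℕ) (s t : ℝ) : IsOpen (simplex n s t) := by
  have h1 : IsOpen {u : Fin n → ℝ | ∀ i, u i ∈ Set.Ioo s t} := by
    rw [setOf_forall]
    exact isOpen_iInter_of_finite fun i =>
      (isOpen_Ioo).preimage (continuous_apply i)
  have h2 : IsOpen {u : Fin n → ℝ | ∀ i j : Fin n, i < j → u i < u j} := by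
    rw [setOf_forall]
    refine isOpen_iInter_of_finite fun i => ?_
    rw [setOf_forall]
    refine isOpen_iInter_of_finite fun j => ?_
    rcases lt_or_ge i j with h | h
    · simp only [h, forall_true_left]
      exact isOpen_lt (continuous_apply i) (continuous_apply j)
    · have : {u : Fin n → ℝ | i < j → u i < u j} = univ := by
        ext u; simp [h.not_gt]
      rw [this]; exact isOpen_univ
  exact h1.inter h2

lemma simplex_subset (n : ℕ) (s t : ℝ) :
    simplex n s t ⊆ Set.pi univ (fun _ : Fin n => Icc s t) := by
  intro u hu i _
  exact Ioo_subset_Icc_self (hu.1 i)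

lemma iterInt_zero (d : ℕ) (x : ℝ → Fin d → ℝ) (s t : ℝ) (idx : Fin 0 → Fin d) :
    iterInt d x 0 s t idx = 1 := by
  have h : simplex 0 s t = univ := by
    ext u; simp [simplex]
  rw [iterInt, h]
  simp only [Finset.univ_eq_empty, Finset.prod_empty]
  rw [setIntegral_const]
  have : (volume : Measure (Fin 0 → ℝ)) univ = 1 := by
    rw [volume_pi, Measure.pi_univ]; simp
  simp [this, Measure.real]

section main
variable {d : ℕ} {x : ℝ → Fin d → ℝ}

lemma cont_prod (hx : Continuous (deriv x)) (n : ℕ) (idx : Fin n → Fin d) :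
    Continuous (fun u : Fin n → ℝ => ∏ i, deriv x (u i) (idx i)) := by
  refine continuous_finset_prod _ fun i _ => ?_
  exact ((continuous_apply (idx i)).comp hx).comp (continuous_apply i)

lemma integrableOn_prod (hx : Continuous (deriv x)) (n : ℕ) (idx : Fin n → Fin d) (s t : ℝ) :
    IntegrableOn (fun u : Fin n → ℝ => ∏ i, deriv x (u i) (idx i)) (simplex n s t) := by
  have hK : IsCompact (Set.pi univ (fun _ : Fin n => Icc s t)) :=
    isCompact_univ_pi fun _ => isCompact_Icc
  exact ((cont_prod hx n idx).continuousOn.integrableOn_compact hK).mono_set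
    (simplex_subset n s t)

lemma simplex_preimage (n : ℕ) (s : ℝ) :
    (MeasurableEquiv.piFinSuccAbove (fun _ : Fin (n+1) => ℝ) (Fin.last n)) ⁻¹'
      {z : ℝ × (Fin n → ℝ) | z.1 ∈ Ioo 0 s ∧ z.2 ∈ simplex n 0 z.1}
      = simplex (n+1) 0 s := by
  ext u
  have happ : ∀ u : Fin (n+1) → ℝ,
      (MeasurableEquiv.piFinSuccAbove (fun _ : Fin (n+1) => ℝ) (Fin.last n)) u
        = (u (Fin.last n), fun j : Fin n => u ((Fin.last n).succAbove j)) := fun u => rfl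
  simp only [mem_preimage, happ, mem_setOf_eq, Fin.succAbove_last, simplex]
  constructor
  · rintro ⟨h1, h2, h3⟩
    refine ⟨fun i => ?_, fun i j hij => ?_⟩
    · refine Fin.lastCases h1 (fun i => ?_) i
      exact ⟨(h2 i).1, (h2 i).2.trans h1.2⟩
    · refine Fin.lastCases ?_ (fun j' hj' => ?_) j hij
      · intro hi
        refine Fin.lastCases ?_ (fun i' _ => (h2 i').2) i hi
        intro h; exact absurd h (lt_irrefl _)
      · refine Fin.lastCases ?_ (fun i' hlt => ?_) i hj'
        · intro h; exact absurd h (show j'.castSucc < Fin.last n from Fin.castSucc_lt_last j').not_gt.elim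
        · exact h3 i' j' (by rwa [Fin.castSucc_lt_castSucc_iff] at hlt)
  · rintro ⟨h1, h2⟩
    refine ⟨h1 (Fin.last n), fun j => ⟨(h1 _).1, h2 _ _ (Fin.castSucc_lt_last j)⟩,
      fun i j hij => h2 _ _ (by rwa [Fin.castSucc_lt_castSucc_iff])⟩

/-- The recursion for iterated integrals. -/
lemma iterInt_succ (hx : Continuous (deriv x)) (n : ℕ) {s : ℝ} (hs : 0 ≤ s)
    (idx : Fin (n+1) → Fin d) :
    iterInt d x (n+1) 0 s idx
      = ∫ p in (0:ℝ)..s,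
          iterInt d x n 0 p (fun i => idx i.castSucc) * deriv x p (idx (Fin.last n)) := by
  classical
  set e := MeasurableEquiv.piFinSuccAbove (fun _ : Fin (n+1) => ℝ) (Fin.last n) with he
  have hmp : MeasurePreserving e volume volume :=
    volume_preserving_piFinSuccAbove (fun _ : Fin (n+1) => ℝ) (Fin.last n)
  set S : Set (ℝ × (Fin n → ℝ)) := {z | z.1 ∈ Ioo 0 s ∧ z.2 ∈ simplex n 0 z.1} with hSdef
  set g : ℝ × (Fin n → ℝ) → ℝ :=
    fun z => (∏ i, deriv x (z.2 i) (idx i.castSucc)) * deriv x z.1 (idx (Fin.last n)) with hg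
  have hpre : e ⁻¹' S = simplex (n+1) 0 s := simplex_preimage n s
  have hSm : MeasurableSet S := by
    have : S = e.symm ⁻¹' (simplex (n+1) 0 s) := by
      rw [← hpre, ← Set.preimage_comp]
      simp [Function.comp_def]
    rw [this]
    exact e.symm.measurable (simplex_isOpen _ _ _).measurableSet
  have hgcont : Continuous g := by
    refine Continuous.mul ?_ ?_
    · refine continuous_finset_prod _ fun i _ => ?_
      exact ((continuous_apply (idx i.castSucc)).comp hx).comp
        ((continuous_apply i).comp continuous_snd)
    · exact ((continuous_apply (idx (Fin.last n))).comp hx).comp continuous_fst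
  -- transfer to the product space
  have h1 : iterInt d x (n+1) 0 s idx = ∫ z in S, g z := by
    rw [iterInt, ← hpre, ← hmp.setIntegral_preimage_emb e.measurableEmbedding g S]
    refine setIntegral_congr_fun (e.measurable hSm) fun u _ => ?_
    show (∏ i : Fin (n+1), deriv x (u i) (idx i)) = g (e u)
    have : g (e u) = (∏ i : Fin n, deriv x (u ((Fin.last n).succAbove i)) (idx i.castSucc)) *
        deriv x (u (Fin.last n)) (idx (Fin.last n)) := rfl
    rw [this, Fin.prod_univ_castSucc]
    congr 1
    exact Finset.prod_congr rfl fun i _ => by rw [Fin.succAbove_last]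
  -- integrability on S
  have hSsub : S ⊆ (Icc 0 s) ×ˢ (Set.pi univ fun _ : Fin n => Icc 0 s) := by
    rintro ⟨p, v⟩ ⟨hp, hv⟩
    exact ⟨Ioo_subset_Icc_self hp, fun i _ =>
      Icc_subset_Icc le_rfl (le_of_lt hp.2) (Ioo_subset_Icc_self (hv.1 i))⟩
  have hint : IntegrableOn g S (volume.prod volume) := by
    have hK : IsCompact ((Icc (0:ℝ) s) ×ˢ (Set.pi univ fun _ : Fin n => Icc (0:ℝ) s)) :=
      isCompact_Icc.prod (isCompact_univ_pi fun _ => isCompact_Icc)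
    have : IntegrableOn g ((Icc (0:ℝ) s) ×ˢ (Set.pi univ fun _ : Fin n => Icc (0:ℝ) s))
        (volume.prod volume) := by
      rw [← Measure.volume_eq_prod]
      exact hgcont.continuousOn.integrableOn_compact hK
    rw [← Measure.volume_eq_prod] at this ⊢
    exact this.mono_set hSsub
  -- Fubini
  have h2 : ∫ z in S, g z ∂(volume : Measure (ℝ × (Fin n → ℝ)))
      = ∫ p : ℝ, ∫ v : Fin n → ℝ, S.indicator g (p, v) := by
    rw [← MeasureTheory.integral_indicator hSm, Measure.volume_eq_prod]
    exact integral_prod _ ((integrable_indicator_iff hSm).2 hint)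
  -- identify the inner integral
  have h3 : ∀ p : ℝ, (∫ v : Fin n → ℝ, S.indicator g (p, v))
      = (Ioo 0 s).indicator
          (fun p => iterInt d x n 0 p (fun i => idx i.castSucc) * deriv x p (idx (Fin.last n))) p := by
    intro p
    by_cases hp : p ∈ Ioo 0 s
    · rw [indicator_of_mem hp]
      have : ∀ v : Fin n → ℝ, S.indicator g (p, v)
          = (simplex n 0 p).indicator
              (fun v => (∏ i, deriv x (v i) (idx i.castSucc)) * deriv x p (idx (Fin.last n))) v := by
        intro v
        by_cases hv : v ∈ simplex n 0 p
        · rw [indicator_of_mem (show (p,v) ∈ S from ⟨hp, hv⟩), indicator_of_mem hv]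
        · rw [indicator_of_notMem (fun h => hv h.2), indicator_of_notMem hv]
      simp_rw [this]
      rw [MeasureTheory.integral_indicator (simplex_isOpen n 0 p).measurableSet]
      rw [iterInt, ← MeasureTheory.integral_mul_const]
    · rw [indicator_of_notMem hp]
      have : ∀ v : Fin n → ℝ, S.indicator g (p, v) = 0 := fun v =>
        indicator_of_notMem (fun h => hp h.1) _
      simp_rw [this, MeasureTheory.integral_zero]
  -- conclude
  rw [h1, h2]
  simp_rw [h3]
  rw [MeasureTheory.integral_indicator measurableSet_Ioo,
    intervalIntegral.integral_of_le hs, integral_Ioc_eq_integral_Ioo]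

end main

/-- Explicit recursive version of `iterInt d x n 0 s idx`. -/
def J (d : ℕ) (x : ℝ → Fin d → ℝ) : (n : ℕ) → (Fin n → Fin d) → ℝ → ℝ
  | 0, _, _ => 1
  | n+1, idx, s => ∫ p in (0:ℝ)..s,
      J d x n (fun i => idx i.castSucc) p * deriv x p (idx (Fin.last n))

section main
variable {d : ℕ} {x : ℝ → Fin d → ℝ}

lemma J_cont (hx : Continuous (deriv x)) :
    ∀ n (idx : Fin n → Fin d), Continuous (J d x n idx)
  | 0, _ => continuous_const
  | n+1, idx => by
    have hint : Continuous fun p =>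
        J d x n (fun i => idx i.castSucc) p * deriv x p (idx (Fin.last n)) :=
      (J_cont hx n _).mul (((continuous_apply _).comp hx))
    exact intervalIntegral.continuous_primitive
      (fun a b => hint.intervalIntegrable a b) 0

lemma J_eq_iterInt (hx : Continuous (deriv x)) :
    ∀ n (idx : Fin n → Fin d) (s : ℝ), 0 ≤ s → iterInt d x n 0 s idx = J d x n idx s
  | 0, idx, s, _ => by rw [iterInt_zero]; rfl
  | n+1, idx, s, hs => by
    rw [iterInt_succ hx n hs idx]
    show _ = ∫ p in (0:ℝ)..s, _
    refine intervalIntegral.integral_congr fun p hp => ?_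
    rw [uIcc_of_le hs] at hp
    rw [J_eq_iterInt hx n _ p hp.1]

lemma J_bound (hx : Continuous (deriv x)) {T M : ℝ} (hM0 : 0 ≤ M)
    (hM : ∀ p ∈ Icc (0:ℝ) T, ∀ i, |deriv x p i| ≤ M) :
    ∀ n (idx : Fin n → Fin d) (s : ℝ), s ∈ Icc (0:ℝ) T →
      |J d x n idx s| ≤ M^n * s^n / n.factorial
  | 0, idx, s, hs => by simp [J]
  | n+1, idx, s, hs => by
    have hs0 : (0:ℝ) ≤ s := hs.1
    have hint : Continuous fun p =>
        J d x n (fun i => idx i.castSucc) p * deriv x p (idx (Fin.last n)) :=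
      (J_cont hx n _).mul (((continuous_apply _).comp hx))
    have h1 : |J d x (n+1) idx s| ≤ ∫ p in (0:ℝ)..s,
        |J d x n (fun i => idx i.castSucc) p * deriv x p (idx (Fin.last n))| :=
      intervalIntegral.abs_integral_le_integral_abs hs0
    have h2 : (∫ p in (0:ℝ)..s,
        |J d x n (fun i => idx i.castSucc) p * deriv x p (idx (Fin.last n))|)
        ≤ ∫ p in (0:ℝ)..s, M^(n+1) * p^n / n.factorial := by
      refine intervalIntegral.integral_mono_on hs0
        (hint.abs.intervalIntegrable _ _)
        (Continuous.intervalIntegrable (by continuity) _ _) fun p hp => ?_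
      have hpT : p ∈ Icc (0:ℝ) T := ⟨hp.1, hp.2.trans hs.2⟩
      rw [abs_mul]
      calc |J d x n (fun i => idx i.castSucc) p| * |deriv x p (idx (Fin.last n))|
          ≤ (M^n * p^n / n.factorial) * M := by
            refine mul_le_mul (J_bound hx hM0 hM n _ p hpT) (hM p hpT _)
              (abs_nonneg _)
              (div_nonneg (mul_nonneg (pow_nonneg hM0 n) (pow_nonneg hp.1 n))
                (Nat.cast_nonneg _))
        _ = M^(n+1) * p^n / n.factorial := by ring
    have h3 : (∫ p in (0:ℝ)..s, M^(n+1) * p^n / n.factorial)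
        = M^(n+1) * s^(n+1) / (n+1).factorial := by
      have : (fun p : ℝ => M^(n+1) * p^n / n.factorial)
          = fun p : ℝ => (M^(n+1) / n.factorial) * p^n := by ext p; ring
      rw [this, intervalIntegral.integral_const_mul, integral_pow, Nat.factorial_succ]
      push_cast
      rw [zero_pow n.succ_ne_zero]
      simp only [div_eq_mul_inv, mul_inv]
      ring
    calc |J d x (n+1) idx s| ≤ _ := h1
      _ ≤ _ := h2
      _ = _ := h3

end main

/-- The level-n summand of the signature kernel. -/
def K (d : ℕ) (x y : ℝ → Fin d → ℝ) (n : ℕ) (s t : ℝ) : ℝ :=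
  ∑ idx : Fin n → Fin d, J d x n idx s * J d y n idx t

section main
variable {d : ℕ} {x y : ℝ → Fin d → ℝ}

lemma K_zero (s t : ℝ) : K d x y 0 s t = 1 := by
  simp [K, J]

lemma K_cont2 (hx : Continuous (deriv x)) (hy : Continuous (deriv y)) (n : ℕ) :
    Continuous (fun z : ℝ × ℝ => K d x y n z.1 z.2) := by
  refine continuous_finset_sum _ fun idx _ => ?_
  exact ((J_cont hx n idx).comp continuous_fst).mul ((J_cont hy n idx).comp continuous_snd)

lemma K_bound (hx : Continuous (deriv x)) (hy : Continuous (deriv y)) {T M : ℝ} (hM0 : 0 ≤ M)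
    (hMx : ∀ p ∈ Icc (0:ℝ) T, ∀ i, |deriv x p i| ≤ M)
    (hMy : ∀ p ∈ Icc (0:ℝ) T, ∀ i, |deriv y p i| ≤ M)
    (n : ℕ) {p q : ℝ} (hp : p ∈ Icc (0:ℝ) T) (hq : q ∈ Icc (0:ℝ) T) :
    |K d x y n p q| ≤ (d * M^2 * T^2)^n / (n.factorial)^2 := by
  have hT0 : (0:ℝ) ≤ T := hp.1.trans hp.2
  have hb : ∀ (s : ℝ), s ∈ Icc (0:ℝ) T → ∀ (z : ℝ → Fin d → ℝ),
      Continuous (deriv z) → (∀ p ∈ Icc (0:ℝ) T, ∀ i, |deriv z p i| ≤ M) →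
      ∀ idx : Fin n → Fin d, |J d z n idx s| ≤ M^n * T^n / n.factorial := by
    intro s hs z hz hMz idx
    refine (J_bound hz hM0 hMz n idx s hs).trans ?_
    exact (div_le_div_iff_of_pos_right (Nat.cast_pos.2 n.factorial_pos)).2
      (mul_le_mul_of_nonneg_left (pow_le_pow_left₀ hs.1 hs.2 n) (pow_nonneg hM0 n))
  calc |K d x y n p q| ≤ ∑ idx : Fin n → Fin d, |J d x n idx p * J d y n idx q| :=
        Finset.abs_sum_le_sum_abs _ _
    _ ≤ ∑ _idx : Fin n → Fin d, (M^n * T^n / n.factorial) * (M^n * T^n / n.factorial) := by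
        refine Finset.sum_le_sum fun idx _ => ?_
        rw [abs_mul]
        exact mul_le_mul (hb p hp x hx hMx idx) (hb q hq y hy hMy idx) (abs_nonneg _)
          (by positivity)
    _ = (d:ℝ)^n * ((M^n * T^n / n.factorial) * (M^n * T^n / n.factorial)) := by
        rw [Finset.sum_const, Finset.card_univ]
        simp [Fintype.card_fun]
    _ = (d * M^2 * T^2)^n / (n.factorial)^2 := by
        rw [mul_pow, mul_pow, div_mul_div_comm]
        ring

lemma K_summable_bound (d : ℕ) (M T : ℝ) :
    Summable (fun n : ℕ => (d * M^2 * T^2)^n / ((n.factorial : ℝ))^2) := by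
  by_cases hC : 0 ≤ (d:ℝ) * M^2 * T^2
  · refine Summable.of_nonneg_of_le (fun n => by positivity) (fun n => ?_)
      (Real.summable_pow_div_factorial (d * M^2 * T^2))
    rw [div_le_div_iff₀ (by positivity) (Nat.cast_pos.2 n.factorial_pos)]
    calc (d * M^2 * T^2)^n * n.factorial
        ≤ (d * M^2 * T^2)^n * ((n.factorial : ℝ) * n.factorial) := by
          refine mul_le_mul_of_nonneg_left ?_ (pow_nonneg hC n)
          have hf1 : (1:ℝ) ≤ (n.factorial:ℝ) := Nat.one_le_cast.2 n.factorial_pos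
          have hf0 : (0:ℝ) < (n.factorial:ℝ) := Nat.cast_pos.2 n.factorial_pos
          exact le_mul_of_one_le_left hf0.le hf1
      _ = (d * M^2 * T^2)^n * (n.factorial : ℝ)^2 := by ring
  · exfalso; exact hC (by positivity)

/-- Recursion for K. -/
lemma K_succ (hx : Continuous (deriv x)) (hy : Continuous (deriv y)) (n : ℕ) (s t : ℝ) :
    K d x y (n+1) s t
      = ∫ p in (0:ℝ)..s, ∫ q in (0:ℝ)..t,
          K d x y n p q * tInner (deriv x p) (deriv y q) := by
  classical
  -- abbreviations
  set Ax : (Fin n → Fin d) → Fin d → ℝ → ℝ :=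
    fun a i p => J d x n a p * deriv x p i with hAx
  set By : (Fin n → Fin d) → Fin d → ℝ → ℝ :=
    fun a i q => J d y n a q * deriv y q i with hBy
  have hAxc : ∀ a i, Continuous (Ax a i) :=
    fun a i => (J_cont hx n a).mul ((continuous_apply i).comp hx)
  have hByc : ∀ a i, Continuous (By a i) :=
    fun a i => (J_cont hy n a).mul ((continuous_apply i).comp hy)
  have key : ∀ p q : ℝ,
      (∑ idx : Fin (n+1) → Fin d,
        Ax (fun i => idx i.castSucc) (idx (Fin.last n)) p *
          By (fun i => idx i.castSucc) (idx (Fin.last n)) q)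
      = K d x y n p q * tInner (deriv x p) (deriv y q) := by
    intro p q
    have hsnoc : ∀ (z : Fin d × (Fin n → Fin d)),
        ((fun i : Fin n =>
          (Fin.snocEquiv (fun _ : Fin (n+1) => Fin d) z) i.castSucc) = z.2) ∧
        ((Fin.snocEquiv (fun _ : Fin (n+1) => Fin d) z) (Fin.last n) = z.1) := by
      intro z
      refine ⟨funext fun i => ?_, ?_⟩
      · simp [Fin.snocEquiv]
      · simp [Fin.snocEquiv]
    rw [← Fintype.sum_equiv (Fin.snocEquiv (fun _ : Fin (n+1) => Fin d))
      (fun z : Fin d × (Fin n → Fin d) => Ax z.2 z.1 p * By z.2 z.1 q)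
      (fun idx => Ax (fun i => idx i.castSucc) (idx (Fin.last n)) p *
        By (fun i => idx i.castSucc) (idx (Fin.last n)) q)
      (fun z => by simp only [(hsnoc z).1, (hsnoc z).2])]
    rw [Fintype.sum_prod_type]
    rw [K, tInner, Finset.mul_sum]
    refine Finset.sum_congr rfl fun i0 _ => ?_
    rw [Finset.sum_mul]
    refine Finset.sum_congr rfl fun a _ => ?_
    simp only [hAx, hBy]
    ring
  -- now compute
  have step1 : K d x y (n+1) s t
      = ∑ idx : Fin (n+1) → Fin d,
          (∫ p in (0:ℝ)..s, Ax (fun i => idx i.castSucc) (idx (Fin.last n)) p) *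
          (∫ q in (0:ℝ)..t, By (fun i => idx i.castSucc) (idx (Fin.last n)) q) := rfl
  rw [step1]
  have step2 : ∀ idx : Fin (n+1) → Fin d,
      (∫ p in (0:ℝ)..s, Ax (fun i => idx i.castSucc) (idx (Fin.last n)) p) *
      (∫ q in (0:ℝ)..t, By (fun i => idx i.castSucc) (idx (Fin.last n)) q)
      = ∫ p in (0:ℝ)..s, ∫ q in (0:ℝ)..t,
          Ax (fun i => idx i.castSucc) (idx (Fin.last n)) p *
          By (fun i => idx i.castSucc) (idx (Fin.last n)) q := by
    intro idx
    rw [← intervalIntegral.integral_mul_const]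
    refine intervalIntegral.integral_congr fun p _ => ?_
    rw [← intervalIntegral.integral_const_mul]
  simp_rw [step2]
  have hint2 : ∀ (a : Fin n → Fin d) (i : Fin d) (p : ℝ),
      IntervalIntegrable (fun q => Ax a i p * By a i q) volume 0 t :=
    fun a i p => (continuous_const.mul (hByc a i)).intervalIntegrable _ _
  have hint1 : ∀ (a : Fin n → Fin d) (i : Fin d),
      IntervalIntegrable (fun p => ∫ q in (0:ℝ)..t, Ax a i p * By a i q) volume 0 s := by
    intro a i
    have : (fun p => ∫ q in (0:ℝ)..t, Ax a i p * By a i q)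
        = fun p => Ax a i p * ∫ q in (0:ℝ)..t, By a i q :=
      funext fun p => intervalIntegral.integral_const_mul _ _
    rw [this]
    exact ((hAxc a i).mul continuous_const).intervalIntegrable _ _
  rw [← intervalIntegral.integral_finset_sum (fun idx _ => hint1 _ _)]
  refine intervalIntegral.integral_congr fun p _ => ?_
  rw [← intervalIntegral.integral_finset_sum (fun idx _ => hint2 _ _ p)]
  exact intervalIntegral.integral_congr fun q _ => key p q

end main

/-- The signature kernel satisfies the Volterra-type integral equation
k(s,t) = 1 + ∫₀^s ∫₀^t k(p,q) ⟨ẋ_p, ẏ_q⟩ dq dp. -/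
theorem stmt3 (d : ℕ) (T : ℝ) (x y : ℝ → Fin d → ℝ)
    (hx : ContDiff ℝ 1 x) (hy : ContDiff ℝ 1 y) :
    ∀ s ∈ Icc (0 : ℝ) T, ∀ t ∈ Icc (0 : ℝ) T,
      sigKernel d x y s t
        = 1 + ∫ p in (0 : ℝ)..s, ∫ q in (0 : ℝ)..t,
            sigKernel d x y p q * tInner (deriv x p) (deriv y q) := by
  intro s hs t ht
  have hx' : Continuous (deriv x) := hx.continuous_deriv le_rfl
  have hy' : Continuous (deriv y) := hy.continuous_deriv le_rfl
  have hT0 : (0:ℝ) ≤ T := hs.1.trans hs.2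
  obtain ⟨Cx, hCx⟩ := isCompact_Icc.exists_bound_of_continuousOn
    (hx'.continuousOn (s := Icc (0:ℝ) T))
  obtain ⟨Cy, hCy⟩ := isCompact_Icc.exists_bound_of_continuousOn
    (hy'.continuousOn (s := Icc (0:ℝ) T))
  set M : ℝ := max Cx (max Cy 0) with hMdef
  have hM0 : 0 ≤ M := le_max_of_le_right (le_max_right _ _)
  have hMx : ∀ p ∈ Icc (0:ℝ) T, ∀ i, |deriv x p i| ≤ M := by
    intro p hp i
    have h1 : |deriv x p i| ≤ ‖deriv x p‖ := by
      rw [← Real.norm_eq_abs]; exact norm_le_pi_norm (deriv x p) i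
    exact h1.trans ((hCx p hp).trans (le_max_left _ _))
  have hMy : ∀ p ∈ Icc (0:ℝ) T, ∀ i, |deriv y p i| ≤ M := by
    intro p hp i
    have h1 : |deriv y p i| ≤ ‖deriv y p‖ := by
      rw [← Real.norm_eq_abs]; exact norm_le_pi_norm (deriv y p) i
    exact h1.trans ((hCy p hp).trans (le_max_of_le_right (le_max_left _ _)))
  -- continuity and bound on the inner product of derivatives
  have hgc : Continuous fun z : ℝ × ℝ => tInner (deriv x z.1) (deriv y z.2) := by
    simp only [tInner]
    exact continuous_finset_sum _ fun i _ =>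
      (((continuous_apply i).comp hx').comp continuous_fst).mul
        (((continuous_apply i).comp hy').comp continuous_snd)
  have hgb : ∀ p ∈ Icc (0:ℝ) T, ∀ q ∈ Icc (0:ℝ) T,
      |tInner (deriv x p) (deriv y q)| ≤ d * M^2 := by
    intro p hp q hq
    calc |tInner (deriv x p) (deriv y q)|
        ≤ ∑ i, |deriv x p i * deriv y q i| := Finset.abs_sum_le_sum_abs _ _
      _ ≤ ∑ _i : Fin d, M * M := Finset.sum_le_sum fun i _ => by
          rw [abs_mul]; exact mul_le_mul (hMx p hp i) (hMy q hq i) (abs_nonneg _) hM0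
      _ = d * M^2 := by rw [Finset.sum_const, Finset.card_univ, Fintype.card_fin]; push_cast; ring
  -- summable bound
  set B : ℕ → ℝ := fun n => (d * M^2 * T^2)^n / ((n.factorial:ℝ))^2 with hBdef
  have hBsum : Summable B := K_summable_bound d M T
  have hB0 : ∀ n, 0 ≤ B n := fun n => by
    have : B n = (d * M^2 * T^2)^n / ((n.factorial:ℝ))^2 := rfl
    rw [this]; positivity
  have hKb : ∀ (n : ℕ), ∀ p ∈ Icc (0:ℝ) T, ∀ q ∈ Icc (0:ℝ) T, |K d x y n p q| ≤ B n :=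
    fun n p hp q hq => K_bound hx' hy' hM0 hMx hMy n hp hq
  have hKsum : ∀ p ∈ Icc (0:ℝ) T, ∀ q ∈ Icc (0:ℝ) T, Summable fun n => K d x y n p q :=
    fun p hp q hq => Summable.of_abs
      (Summable.of_nonneg_of_le (fun n => abs_nonneg _) (fun n => hKb n p hp q hq) hBsum)
  -- sigKernel as a sum of the K levels
  have hsig : ∀ p, 0 ≤ p → ∀ q, 0 ≤ q →
      sigKernel d x y p q = ∑' n, K d x y n p q := by
    intro p hp q hq
    refine tsum_congr fun n => ?_
    rw [tInner, K]
    exact Finset.sum_congr rfl fun idx _ => by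
      rw [J_eq_iterInt hx' n idx p hp, J_eq_iterInt hy' n idx q hq]
  have hFc : ∀ n : ℕ, Continuous fun z : ℝ × ℝ =>
      K d x y n z.1 z.2 * tInner (deriv x z.1) (deriv y z.2) :=
    fun n => (K_cont2 hx' hy' n).mul hgc
  have hFb : ∀ (n : ℕ), ∀ p ∈ Icc (0:ℝ) T, ∀ q ∈ Icc (0:ℝ) T,
      |K d x y n p q * tInner (deriv x p) (deriv y q)| ≤ B n * (d * M^2) := by
    intro n p hp q hq
    rw [abs_mul]
    exact mul_le_mul (hKb n p hp q hq) (hgb p hp q hq) (abs_nonneg _) (hB0 n)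
  have hBsum' : Summable fun n => B n * (d*M^2) := hBsum.mul_right _
  have hfin : ∀ u : ℝ, IsFiniteMeasure (volume.restrict (Ioc (0:ℝ) u)) := fun u =>
    ⟨by rw [Measure.restrict_apply_univ]; exact measure_Ioc_lt_top⟩
  -- K_succ in Ioc form
  have hst : ∀ n : ℕ, K d x y (n+1) s t
      = ∫ p in Ioc (0:ℝ) s, ∫ q in Ioc (0:ℝ) t,
          K d x y n p q * tInner (deriv x p) (deriv y q) := by
    intro n
    rw [K_succ hx' hy' n s t, intervalIntegral.integral_of_le hs.1]
    refine setIntegral_congr_fun measurableSet_Ioc fun p _ => ?_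
    rw [intervalIntegral.integral_of_le ht.1]
  -- inner HasSum
  have inner : ∀ p ∈ Icc (0:ℝ) T,
      HasSum (fun n => ∫ q in Ioc (0:ℝ) t,
          K d x y n p q * tInner (deriv x p) (deriv y q))
        (∫ q in Ioc (0:ℝ) t,
          sigKernel d x y p q * tInner (deriv x p) (deriv y q)) := by
    intro p hp
    have hmeas : ∀ n : ℕ, AEStronglyMeasurable
        (fun q => K d x y n p q * tInner (deriv x p) (deriv y q))
        (volume.restrict (Ioc (0:ℝ) t)) :=
      fun n => ((hFc n).comp (Continuous.prodMk_right p)).aestronglyMeasurable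
    refine MeasureTheory.hasSum_integral_of_dominated_convergence
      (fun n _ => B n * (d*M^2)) hmeas (fun n => ?_) ?_ ?_ ?_
    · refine (ae_restrict_iff' measurableSet_Ioc).2 (ae_of_all _ fun q hq => ?_)
      rw [Real.norm_eq_abs]
      exact hFb n p hp q ⟨hq.1.le, hq.2.trans ht.2⟩
    · exact ae_of_all _ fun q => hBsum'
    · have := hfin t; exact integrable_const _
    · refine (ae_restrict_iff' measurableSet_Ioc).2 (ae_of_all _ fun q hq => ?_)
      have hq' : q ∈ Icc (0:ℝ) T := ⟨hq.1.le, hq.2.trans ht.2⟩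
      rw [hsig p hp.1 q hq'.1]
      exact ((hKsum p hp q hq').hasSum).mul_right _
  -- outer HasSum
  have outer : HasSum
      (fun n => ∫ p in Ioc (0:ℝ) s, ∫ q in Ioc (0:ℝ) t,
          K d x y n p q * tInner (deriv x p) (deriv y q))
      (∫ p in Ioc (0:ℝ) s, ∫ q in Ioc (0:ℝ) t,
          sigKernel d x y p q * tInner (deriv x p) (deriv y q)) := by
    have hmeas : ∀ n : ℕ, AEStronglyMeasurable
        (fun p => ∫ q in Ioc (0:ℝ) t,
          K d x y n p q * tInner (deriv x p) (deriv y q))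
        (volume.restrict (Ioc (0:ℝ) s)) := by
      intro n
      exact ((hFc n).stronglyMeasurable.integral_prod_right'
        (ν := volume.restrict (Ioc (0:ℝ) t))).aestronglyMeasurable
    refine MeasureTheory.hasSum_integral_of_dominated_convergence
      (fun n _ => (B n * (d*M^2)) * T) hmeas (fun n => ?_) ?_ ?_ ?_
    · refine (ae_restrict_iff' measurableSet_Ioc).2 (ae_of_all _ fun p hp => ?_)
      have hp' : p ∈ Icc (0:ℝ) T := ⟨hp.1.le, hp.2.trans hs.2⟩
      have h1 : ‖∫ q in Ioc (0:ℝ) t,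
          K d x y n p q * tInner (deriv x p) (deriv y q)‖
          ≤ (B n * (d*M^2)) * (volume (Ioc (0:ℝ) t)).toReal := by
        refine norm_setIntegral_le_of_norm_le_const measure_Ioc_lt_top
          (fun q hq => ?_)
        rw [Real.norm_eq_abs]
        exact hFb n p hp' q ⟨hq.1.le, hq.2.trans ht.2⟩
      refine h1.trans ?_
      have h2 : (volume (Ioc (0:ℝ) t)).toReal ≤ T := by
        rw [Real.volume_Ioc, ENNReal.toReal_ofReal (by linarith [ht.1])]
        linarith [ht.2]
      exact mul_le_mul_of_nonneg_left h2 (mul_nonneg (hB0 n) (by positivity))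
    · exact ae_of_all _ fun p => hBsum'.mul_right _
    · have := hfin s; exact integrable_const _
    · refine (ae_restrict_iff' measurableSet_Ioc).2 (ae_of_all _ fun p hp => ?_)
      exact inner p ⟨hp.1.le, hp.2.trans hs.2⟩
  -- assemble
  calc sigKernel d x y s t = ∑' n, K d x y n s t := hsig s hs.1 t ht.1
    _ = K d x y 0 s t + ∑' n, K d x y (n+1) s t := Summable.tsum_eq_zero_add (hKsum s hs t ht)
    _ = 1 + ∑' n, ∫ p in Ioc (0:ℝ) s, ∫ q in Ioc (0:ℝ) t,
          K d x y n p q * tInner (deriv x p) (deriv y q) := by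
        rw [K_zero]; exact congrArg (1 + ·) (tsum_congr hst)
    _ = 1 + ∫ p in Ioc (0:ℝ) s, ∫ q in Ioc (0:ℝ) t,
          sigKernel d x y p q * tInner (deriv x p) (deriv y q) := by
        rw [outer.tsum_eq]
    _ = 1 + ∫ p in (0:ℝ)..s, ∫ q in (0:ℝ)..t,
          sigKernel d x y p q * tInner (deriv x p) (deriv y q) := by
        congr 1
        rw [intervalIntegral.integral_of_le hs.1]
        refine setIntegral_congr_fun measurableSet_Ioc fun p _ => ?_
        rw [intervalIntegral.integral_of_le ht.1]
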